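/- arXiv:2303.06921 — 3 statements merged into one kernel-verified Lean document; each statement's English description precedes it below -/
import Mathlib

section
/- Let n ≥ 2 and S a semiring. There exist a semiring R and a left R-semimodule M such that the semiring End(_R M) of R-endomorphisms of M is isomorphic to M_n(S) if and only if S has a zero and a unity. -/
/-- A semiring in the sense of the paper: associative `+` and `*`, `+` commutative,
`*` distributing over `+` from both sides; no zero or unity assumed. -/
class PSemiring (S : Type) extends AddCommSemigroup S, Semigroup S where
  left_distrib : ∀ a b c : S, a * (b + c) = a * b + a * c
  right_distrib : ∀ a b c : S, (a + b) * c = a * c + b * c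

section Defs
variable {T : Type} [Add T] [Mul T]

def MulAbsorbing (w : T) : Prop := ∀ a : T, a * w = w ∧ w * a = w
def AddAbsorbing (w : T) : Prop := ∀ a : T, a + w = w
def AddNeutral (w : T) : Prop := ∀ a : T, a + w = a
def BiAbsorbing (w : T) : Prop := MulAbsorbing w ∧ AddAbsorbing w
def IsZero (w : T) : Prop := MulAbsorbing w ∧ AddNeutral w
def IsUnity (w : T) : Prop := ∀ a : T, w * a = a ∧ a * w = a

def IsBiIdeal (I : Set T) : Prop :=
  I.Nonempty ∧ ∀ a ∈ I, ∀ s : T, a + s ∈ I ∧ a * s ∈ I ∧ s * a ∈ I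

def IsCongruence (r : T → T → Prop) : Prop :=
  Equivalence r ∧ (∀ a b c d : T, r a b → r c d → r (a + c) (b + d)) ∧
    (∀ a b c d : T, r a b → r c d → r (a * c) (b * d))

/-- The standard quasiordering on a semiring. -/
def leS (a b : T) : Prop := a = b ∨ ∃ c : T, a + c = b

/-- `addPow m b` is the `(m+1)`-fold sum `b + ⋯ + b`. -/
def addPow : ℕ → T → T
  | 0, b => b
  | m + 1, b => addPow m b + b

end Defs

def CongSimple (T : Type) [Add T] [Mul T] : Prop :=
  (∃ a b : T, a ≠ b) ∧
    ∀ r : T → T → Prop, IsCongruence r →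
      (∀ a b : T, r a b ↔ a = b) ∨ (∀ a b : T, r a b)

def BiIdealSimple (T : Type) [Add T] [Mul T] : Prop :=
  (∃ a b : T, a ≠ b) ∧
    ∀ I : Set T, IsBiIdeal I → (∃ w : T, I = {w}) ∨ I = Set.univ

def BiIdealFree (T : Type) [Add T] [Mul T] : Prop :=
  (∃ a b : T, a ≠ b) ∧ ∀ I : Set T, IsBiIdeal I → I = Set.univ

/-- Sum of a nonempty family indexed by `Fin (n+1)`. -/
def finSum {S : Type} [Add S] : ∀ {n : ℕ}, (Fin (n + 1) → S) → S
  | 0, f => f 0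
  | n + 1, f => finSum (fun i : Fin (n + 1) => f i.castSucc) + f (Fin.last (n + 1))

/-- `Mat n S` is the semiring of `(n+1) × (n+1)` matrices over `S`. -/
structure Mat (n : ℕ) (S : Type) where
  entry : Fin (n + 1) → Fin (n + 1) → S

instance {n : ℕ} {S : Type} [Add S] : Add (Mat n S) :=
  ⟨fun A B => ⟨fun i j => A.entry i j + B.entry i j⟩⟩

instance {n : ℕ} {S : Type} [Add S] [Mul S] : Mul (Mat n S) :=
  ⟨fun A B => ⟨fun i j => finSum (fun k => A.entry i k * B.entry k j)⟩⟩

/-- The constant matrix `ā`. -/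
def Mat.const (n : ℕ) {S : Type} (a : S) : Mat n S := ⟨fun _ _ => a⟩


/-- A semiring `R` together with a left `R`-semimodule `M` (all operations raw). -/
structure SMod where
  R : Type
  addR : R → R → R
  mulR : R → R → R
  addR_comm : ∀ a b, addR a b = addR b a
  addR_assoc : ∀ a b c, addR (addR a b) c = addR a (addR b c)
  mulR_assoc : ∀ a b c, mulR (mulR a b) c = mulR a (mulR b c)
  left_distribR : ∀ a b c, mulR a (addR b c) = addR (mulR a b) (mulR a c)
  right_distribR : ∀ a b c, mulR (addR a b) c = addR (mulR a c) (mulR b c)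
  M : Type
  addM : M → M → M
  addM_comm : ∀ a b, addM a b = addM b a
  addM_assoc : ∀ a b c, addM (addM a b) c = addM a (addM b c)
  smul : R → M → M
  smul_addM : ∀ r m m', smul r (addM m m') = addM (smul r m) (smul r m')
  addR_smul : ∀ r r' m, smul (addR r r') m = addM (smul r m) (smul r' m)
  mulR_smul : ∀ r r' m, smul (mulR r r') m = smul r (smul r' m)

lemma SMod.addM_addM_comm (D : SMod) (a b c d : D.M) :
    D.addM (D.addM a b) (D.addM c d) = D.addM (D.addM a c) (D.addM b d) := by
  rw [D.addM_assoc, ← D.addM_assoc b c d, D.addM_comm b c, D.addM_assoc c b d,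
    ← D.addM_assoc]

/-- `R`-endomorphisms of the semimodule `M`. -/
def REnd (D : SMod) : Type :=
  {φ : D.M → D.M // (∀ m m', φ (D.addM m m') = D.addM (φ m) (φ m')) ∧
    ∀ r m, φ (D.smul r m) = D.smul r (φ m)}

/-- Pointwise addition on `REnd D`. -/
def REnd.add {D : SMod} (φ ψ : REnd D) : REnd D :=
  ⟨fun m => D.addM (φ.1 m) (ψ.1 m), by
    refine ⟨fun m m' => ?_, fun r m => ?_⟩
    · dsimp only
      rw [φ.2.1, ψ.2.1, D.addM_addM_comm]
    · dsimp only
      rw [φ.2.2, ψ.2.2, D.smul_addM]⟩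

/-- Composition on `REnd D`. -/
def REnd.comp {D : SMod} (φ ψ : REnd D) : REnd D :=
  ⟨fun m => φ.1 (ψ.1 m), by
    refine ⟨fun m m' => ?_, fun r m => ?_⟩
    · dsimp only
      rw [ψ.2.1, φ.2.1]
    · dsimp only
      rw [ψ.2.2, φ.2.2]⟩

/-! ### Auxiliary material for the proof -/

section FinSumLemmas
variable {S : Type} [PSemiring S]

lemma finSum_succ' {m : ℕ} (f : Fin (m + 2) → S) :
    finSum f = finSum (fun i : Fin (m + 1) => f i.castSucc) + f (Fin.last (m + 1)) := rfl

lemma finSum_mul' {m : ℕ} (f : Fin (m + 1) → S) (a : S) :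
    finSum (fun l => f l * a) = finSum f * a := by
  induction m with
  | zero => rfl
  | succ m ih =>
    rw [finSum_succ' (fun l => f l * a), finSum_succ' f, PSemiring.right_distrib, ih]

lemma mul_finSum' {m : ℕ} (f : Fin (m + 1) → S) (a : S) :
    finSum (fun l => a * f l) = a * finSum f := by
  induction m with
  | zero => rfl
  | succ m ih =>
    rw [finSum_succ' (fun l => a * f l), finSum_succ' f, PSemiring.left_distrib, ih]

lemma finSum_add' {m : ℕ} (f g : Fin (m + 1) → S) :
    finSum (fun l => f l + g l) = finSum f + finSum g := by
  induction m with
  | zero => rfl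
  | succ m ih =>
    rw [finSum_succ' (fun l => f l + g l), finSum_succ' f, finSum_succ' g, ih,
      add_add_add_comm]

lemma finSum_const' {m : ℕ} (z : S) (hzz : z + z = z) :
    finSum (fun _ : Fin (m + 1) => z) = z := by
  induction m with
  | zero => rfl
  | succ m ih =>
    rw [finSum_succ' (fun _ => z)]
    show finSum (fun _ : Fin (m + 1) => z) + z = z
    rw [ih, hzz]

lemma finSum_single' {m : ℕ} (z : S) (hz : ∀ a : S, z + a = a) (j : Fin (m + 1))
    (F : Fin (m + 1) → S) (h : ∀ l, l ≠ j → F l = z) : finSum F = F j := by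
  induction m with
  | zero =>
    rw [Fin.fin_one_eq_zero j]; rfl
  | succ m ih =>
    rcases eq_or_ne j (Fin.last (m + 1)) with rfl | hj
    · have hc : (fun l : Fin (m + 1) => F l.castSucc) = fun _ => z :=
        funext fun l => h _ (Fin.castSucc_lt_last l).ne
      rw [finSum_succ' F, hc, finSum_const' z (hz z), hz]
    · obtain ⟨i, rfl⟩ := Fin.exists_castSucc_eq.mpr hj
      have hlast : F (Fin.last (m + 1)) = z :=
        h _ (fun hc => (Fin.castSucc_lt_last i).ne' hc)
      rw [finSum_succ' F, hlast, ih i (fun l => F l.castSucc)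
        (fun l hl => h _ (fun hc => hl (Fin.castSucc_injective _ hc)))]
      rw [add_comm, hz]

end FinSumLemmas

lemma Mat.ext' {k : ℕ} {S : Type} (X Y : Mat k S)
    (h : ∀ i j, X.entry i j = Y.entry i j) : X = Y := by
  cases X; cases Y
  simp only [Mat.mk.injEq]
  funext i j; exact h i j

section Backward
variable {S : Type} [PSemiring S]

/-- `S^op` acting on `Fin (k+1) → S` on the right. -/
@[reducible] def modD (S : Type) [PSemiring S] (k : ℕ) : SMod where
  R := S
  addR a b := a + b
  mulR a b := b * a
  addR_comm := add_comm
  addR_assoc := add_assoc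
  mulR_assoc a b c := (mul_assoc c b a).symm
  left_distribR a b c := PSemiring.right_distrib b c a
  right_distribR a b c := PSemiring.left_distrib c a b
  M := Fin (k + 1) → S
  addM f g := fun i => f i + g i
  addM_comm f g := funext fun i => add_comm _ _
  addM_assoc f g h := funext fun i => add_assoc _ _ _
  smul r m := fun i => m i * r
  smul_addM r m m' := funext fun i => PSemiring.right_distrib _ _ _
  addR_smul r r' m := funext fun i => PSemiring.left_distrib _ _ _
  mulR_smul r r' m := funext fun i => (mul_assoc _ _ _).symm

def basisV (z e : S) (k : ℕ) (j : Fin (k + 1)) : Fin (k + 1) → S :=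
  fun l => if l = j then e else z

def Msum {k : ℕ} : ∀ {m : ℕ}, (Fin (m + 1) → (Fin (k + 1) → S)) → (Fin (k + 1) → S) :=
  fun v j => finSum (fun l => v l j)

lemma phi_Msum {k m : ℕ} (φ : REnd (modD S k)) (v : Fin (m + 1) → (Fin (k + 1) → S)) :
    φ.1 (Msum v) = Msum (fun l => φ.1 (v l)) := by
  induction m with
  | zero => rfl
  | succ m ih =>
    have h1 : Msum v = (modD S k).addM (Msum (fun l : Fin (m + 1) => v l.castSucc))
        (v (Fin.last (m + 1))) := rfl
    rw [h1, φ.2.1, ih]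
    rfl

lemma expand {k : ℕ} (z e : S) (hz : IsZero z) (he : IsUnity e) (φ : REnd (modD S k))
    (m : Fin (k + 1) → S) (i : Fin (k + 1)) :
    φ.1 m i = finSum (fun l => φ.1 (basisV z e k l) i * m l) := by
  have hzn : ∀ a : S, z + a = a := fun a => by rw [add_comm]; exact hz.2 a
  have hm : Msum (fun l => (modD S k).smul (m l) (basisV z e k l)) = m := by
    funext j
    show finSum (fun l => basisV z e k l j * m l) = m j
    rw [finSum_single' z hzn j (fun l => basisV z e k l j * m l) (fun l hl => by
      show (if j = l then e else z) * m l = z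
      rw [if_neg (Ne.symm hl)]
      exact (hz.1 (m l)).2)]
    show (if j = j then e else z) * m j = m j
    rw [if_pos rfl]
    exact (he (m j)).1
  calc φ.1 m i = φ.1 (Msum (fun l => (modD S k).smul (m l) (basisV z e k l))) i := by rw [hm]
    _ = Msum (fun l => φ.1 ((modD S k).smul (m l) (basisV z e k l))) i := by rw [phi_Msum]
    _ = finSum (fun l => φ.1 (basisV z e k l) i * m l) := by
        show finSum (fun l => φ.1 ((modD S k).smul (m l) (basisV z e k l)) i) = _
        congr 1
        funext l
        rw [φ.2.2]

def matToEnd {k : ℕ} (A : Mat k S) : REnd (modD S k) :=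
  ⟨fun m i => finSum (fun l => A.entry i l * m l), by
    constructor
    · intro m m'
      funext i
      show finSum (fun l => A.entry i l * (m l + m' l))
        = finSum (fun l => A.entry i l * m l) + finSum (fun l => A.entry i l * m' l)
      rw [← finSum_add']
      congr 1
      funext l
      exact PSemiring.left_distrib _ _ _
    · intro r m
      funext i
      show finSum (fun l => A.entry i l * (m l * r))
        = finSum (fun l => A.entry i l * m l) * r
      rw [← finSum_mul']
      congr 1
      funext l
      exact (mul_assoc _ _ _).symm⟩

def endEquiv (z e : S) (hz : IsZero z) (he : IsUnity e) (k : ℕ) :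
    REnd (modD S k) ≃ Mat k S where
  toFun φ := ⟨fun i j => φ.1 (basisV z e k j) i⟩
  invFun := matToEnd
  left_inv φ := Subtype.ext (by
    funext m i
    exact (expand z e hz he φ m i).symm)
  right_inv A := Mat.ext' _ _ (fun i j => by
    have hzn : ∀ a : S, z + a = a := fun a => by rw [add_comm]; exact hz.2 a
    show finSum (fun l => A.entry i l * basisV z e k j l) = A.entry i j
    rw [finSum_single' z hzn j (fun l => A.entry i l * basisV z e k j l) (fun l hl => by
      show A.entry i l * (if l = j then e else z) = z
      rw [if_neg hl]
      exact (hz.1 _).1)]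
    show A.entry i j * (if j = j then e else z) = A.entry i j
    rw [if_pos rfl]
    exact (he _).2)

end Backward
/-- for `n ≥ 2` (`Mat (n+1)` has size `n+2`), there exist a semiring `R`
and a left `R`-semimodule `M` with `End(_R M) ≅ M_n(S)` iff `S` has a zero and a unity. -/
theorem stmt5 {S : Type} [PSemiring S] (n : ℕ) :
    (∃ (D : SMod) (f : REnd D ≃ Mat (n + 1) S),
        (∀ x y : REnd D, f (x.add y) = f x + f y) ∧
        (∀ x y : REnd D, f (x.comp y) = f x * f y)) ↔
      ((∃ z : S, IsZero z) ∧ ∃ e : S, IsUnity e) := by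
  constructor
  · rintro ⟨D, f, hadd, hmul⟩
    -- the identity endomorphism gives a unity matrix U
    set idE : REnd D := ⟨fun m => m, fun _ _ => rfl, fun _ _ => rfl⟩ with hidE
    set U : Mat (n + 1) S := f idE with hUdef
    have hcompl : ∀ φ : REnd D, idE.comp φ = φ := fun φ => rfl
    have hcompr : ∀ φ : REnd D, φ.comp idE = φ := fun φ => rfl
    have hU : ∀ X : Mat (n + 1) S, U * X = X ∧ X * U = X := by
      intro X
      obtain ⟨φ, rfl⟩ : ∃ φ, f φ = X := ⟨f.symm X, f.apply_symm_apply X⟩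
      constructor
      · rw [← hmul, hcompl]
      · rw [← hmul, hcompr]
    -- U acts as the identity on vectors from both sides
    have hrow : ∀ (a : Fin (n + 2) → S) (i : Fin (n + 2)),
        finSum (fun l => U.entry i l * a l) = a i := by
      intro a i
      have h := (hU ⟨fun l _ => a l⟩).1
      exact congrFun (congrFun (congrArg Mat.entry h) i) 0
    have hcol : ∀ (a : Fin (n + 2) → S) (j : Fin (n + 2)),
        finSum (fun l => a l * U.entry l j) = a j := by
      intro a j
      have h := (hU ⟨fun _ l => a l⟩).2
      exact congrFun (congrFun (congrArg Mat.entry h) 0) j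
    -- unity
    have hLu : ∀ (i : Fin (n + 2)) (c : S), finSum (fun l => U.entry i l) * c = c := by
      intro i c
      rw [← finSum_mul']
      exact hrow (fun _ => c) i
    have hRu : ∀ (j : Fin (n + 2)) (c : S), c * finSum (fun l => U.entry l j) = c := by
      intro j c
      rw [← mul_finSum']
      exact hcol (fun _ => c) j
    have hecol : finSum (fun l => U.entry 0 l) = finSum (fun l => U.entry l 0) := by
      have h1 := hRu 0 (finSum (fun l => U.entry 0 l))
      have h2 := hLu 0 (finSum (fun l => U.entry l 0))
      rw [← h1, h2]
    -- zero
    have h0L : (0 : Fin (n + 2)) ≠ Fin.last (n + 1) := by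
      simp [Fin.ext_iff]
    have hsplitrow : ∀ (i : Fin (n + 2)) (x y : S),
        finSum (fun l : Fin (n + 1) => U.entry i l.castSucc) * y
          + U.entry i (Fin.last (n + 1)) * x
          = Fin.lastCases (motive := fun _ => S) x (fun _ => y) i := by
      intro i x y
      have h : finSum (fun l : Fin (n + 1) =>
            U.entry i l.castSucc * Fin.lastCases (motive := fun _ => S) x (fun _ => y) l.castSucc)
          + U.entry i (Fin.last (n + 1))
            * Fin.lastCases (motive := fun _ => S) x (fun _ => y) (Fin.last (n + 1))
          = Fin.lastCases (motive := fun _ => S) x (fun _ => y) i :=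
        hrow (fun l => Fin.lastCases (motive := fun _ => S) x (fun _ => y) l) i
      simp only [Fin.lastCases_castSucc, Fin.lastCases_last] at h
      rw [finSum_mul'] at h
      exact h
    have hsplitcol : ∀ (j : Fin (n + 2)) (x y : S),
        y * finSum (fun l : Fin (n + 1) => U.entry l.castSucc j)
          + x * U.entry (Fin.last (n + 1)) j
          = Fin.lastCases (motive := fun _ => S) x (fun _ => y) j := by
      intro j x y
      have h : finSum (fun l : Fin (n + 1) =>
            Fin.lastCases (motive := fun _ => S) x (fun _ => y) l.castSucc * U.entry l.castSucc j)
          + Fin.lastCases (motive := fun _ => S) x (fun _ => y) (Fin.last (n + 1))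
            * U.entry (Fin.last (n + 1)) j
          = Fin.lastCases (motive := fun _ => S) x (fun _ => y) j :=
        hcol (fun l => Fin.lastCases (motive := fun _ => S) x (fun _ => y) l) j
      simp only [Fin.lastCases_castSucc, Fin.lastCases_last] at h
      rw [mul_finSum'] at h
      exact h
    set BL : S := finSum (fun l : Fin (n + 1) => U.entry (Fin.last (n + 1)) l.castSucc)
    set AL : S := U.entry (Fin.last (n + 1)) (Fin.last (n + 1))
    set B0 : S := finSum (fun l : Fin (n + 1) => U.entry 0 l.castSucc)
    set A0 : S := U.entry 0 (Fin.last (n + 1))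
    set BL' : S := finSum (fun l : Fin (n + 1) => U.entry l.castSucc (Fin.last (n + 1)))
    set B0' : S := finSum (fun l : Fin (n + 1) => U.entry l.castSucc 0)
    set A0' : S := U.entry (Fin.last (n + 1)) 0
    have hlc0 : ∀ x y : S, Fin.lastCases (motive := fun _ => S) x (fun _ => y) (0 : Fin (n + 2)) = y :=
      fun x y => Fin.lastCases_castSucc (motive := fun _ => S) (last := x) (cast := fun _ => y) 0
    have hI : ∀ x y : S, BL * y + AL * x = x := by
      intro x y
      have := hsplitrow (Fin.last (n + 1)) x y
      rwa [Fin.lastCases_last] at this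
    have hII : ∀ x y : S, B0 * y + A0 * x = y := by
      intro x y
      have := hsplitrow 0 x y
      rwa [hlc0] at this
    have hIII : ∀ x y : S, y * BL' + x * AL = x := by
      intro x y
      have := hsplitcol (Fin.last (n + 1)) x y
      rwa [Fin.lastCases_last] at this
    have hIV : ∀ x y : S, y * B0' + x * A0' = y := by
      intro x y
      have := hsplitcol 0 x y
      rwa [hlc0] at this
    have hn1 : ∀ y a : S, BL * y + a = a := by
      intro y a
      calc BL * y + a = BL * y + (BL * y + AL * a) := by rw [hI a y]
        _ = BL * (y + y) + AL * a := by
            rw [← add_assoc, ← PSemiring.left_distrib]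
        _ = a := hI a (y + y)
    have hn2 : ∀ x a : S, A0 * x + a = a := by
      intro x a
      calc A0 * x + a = A0 * x + (B0 * a + A0 * x) := by rw [hII x a]
        _ = B0 * a + A0 * (x + x) := by
            rw [add_left_comm, ← PSemiring.left_distrib]
        _ = a := hII (x + x) a
    have hn3 : ∀ y a : S, y * BL' + a = a := by
      intro y a
      calc y * BL' + a = y * BL' + (y * BL' + a * AL) := by rw [hIII a y]
        _ = (y + y) * BL' + a * AL := by
            rw [← add_assoc, ← PSemiring.right_distrib]
        _ = a := hIII a (y + y)
    have hn4 : ∀ x a : S, x * A0' + a = a := by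
      intro x a
      calc x * A0' + a = x * A0' + (a * B0' + x * A0') := by rw [hIV x a]
        _ = a * B0' + (x + x) * A0' := by
            rw [add_left_comm, ← PSemiring.right_distrib]
        _ = a := hIV (x + x) a
    have huniq : ∀ c d : S, (∀ a, c + a = a) → (∀ a, d + a = a) → c = d := by
      intro c d hc hd
      calc c = d + c := (hd c).symm
        _ = c + d := add_comm _ _
        _ = d := hc d
    set z : S := A0 * A0 with hzdef
    have hzn : ∀ a : S, z + a = a := hn2 A0
    refine ⟨⟨z, ?_, ?_⟩, ⟨finSum (fun l => U.entry 0 l), ?_⟩⟩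
    · -- MulAbsorbing z
      intro a
      constructor
      · -- a * z = z
        have h1 : z = A0 * BL' := huniq _ _ hzn (hn3 A0)
        calc a * z = (a * A0) * BL' := by rw [h1, mul_assoc]
          _ = z := huniq _ _ (hn3 (a * A0)) hzn
      · -- z * a = z
        have h1 : z = A0 * A0 := rfl
        calc z * a = A0 * (A0 * a) := by rw [h1, mul_assoc]
          _ = z := huniq _ _ (hn2 (A0 * a)) hzn
    · -- AddNeutral z
      intro a
      rw [add_comm]
      exact hzn a
    · -- IsUnity
      intro a
      refine ⟨hLu 0 a, ?_⟩
      rw [hecol]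
      exact hRu 0 a
  · rintro ⟨⟨z, hz⟩, ⟨e, he⟩⟩
    refine ⟨modD S (n + 1), endEquiv z e hz he (n + 1), ?_, ?_⟩
    · intro x y
      exact Mat.ext' _ _ (fun i j => rfl)
    · intro x y
      apply Mat.ext'
      intro i j
      show (x.comp y).1 (basisV z e (n + 1) j) i
        = finSum (fun l => x.1 (basisV z e (n + 1) l) i * y.1 (basisV z e (n + 1) j) l)
      exact expand z e hz he x (y.1 (basisV z e (n + 1) j)) i
end

section
/- Let S be a semiring having a multiplicatively absorbing element (or more generally such that M_k(S) has one for some k ≥ 1). Then the following are equivalent: (i) M_n(S) is congruence-simple for every n ≥ 1; (ii) M_n(S) is congruence-simple for at least one n ≥ 2; (iii) S is congruence-simple, S contains no bi-absorbing element, and |S·S| ≥ 2. -/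
section Aux
variable {S : Type} [PSemiring S]

theorem pdl (a b c : S) : a * (b + c) = a * b + a * c := PSemiring.left_distrib a b c
theorem pdr (a b c : S) : (a + b) * c = a * c + b * c := PSemiring.right_distrib a b c

theorem finSum_rel {T : Type} [Add T] (r : T → T → Prop)
    (hadd : ∀ a b c d : T, r a b → r c d → r (a + c) (b + d)) :
    ∀ {n : ℕ} (f g : Fin (n + 1) → T), (∀ i, r (f i) (g i)) → r (finSum f) (finSum g)
  | 0, f, g, h => h 0
  | (n + 1), f, g, h =>
    hadd _ _ _ _ (finSum_rel r hadd _ _ fun i => h i.castSucc) (h _)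

theorem finSum_congr {T : Type} [Add T] {n : ℕ} {f g : Fin (n + 1) → T}
    (h : ∀ i, f i = g i) : finSum f = finSum g := by
  rw [funext h]

theorem finSum_eq_single {w : S} (hw : AddNeutral w) :
    ∀ {n : ℕ} (f : Fin (n + 1) → S) (k : Fin (n + 1)),
      (∀ c, c ≠ k → f c = w) → finSum f = f k := by
  intro n
  induction n with
  | zero => intro f k _; show f 0 = f k; exact congrArg f (Fin.eq_zero k).symm
  | succ n ih =>
    intro f k hc
    show finSum (fun i : Fin (n + 1) => f i.castSucc) + f (Fin.last (n + 1)) = f k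
    rcases eq_or_ne k (Fin.last (n + 1)) with rfl | hk
    · have h1 : finSum (fun i : Fin (n + 1) => f i.castSucc) = w := by
        have := ih (fun i : Fin (n + 1) => f i.castSucc) 0
          (fun c _ => hc _ (Fin.castSucc_lt_last c).ne)
        rw [this]; exact hc _ (Fin.castSucc_lt_last 0).ne
      rw [h1, add_comm]; exact hw _
    · obtain ⟨k', rfl⟩ := Fin.exists_castSucc_eq.mpr hk
      have h1 : finSum (fun i : Fin (n + 1) => f i.castSucc) = f k'.castSucc := by
        refine ih _ k' fun c hck => hc _ ?_
        exact fun e => hck (Fin.castSucc_injective _ e)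
      rw [h1, hc (Fin.last (n + 1)) (Ne.symm hk)]; exact hw _

theorem finSum_all {w : S} (hw : AddNeutral w) {n : ℕ} (f : Fin (n + 1) → S)
    (h : ∀ c, f c = w) : finSum f = w :=
  (finSum_eq_single hw f 0 fun c _ => h c).trans (h 0)

theorem finSum_absorb {o : S} (ho : AddAbsorbing o) :
    ∀ {n : ℕ} (f : Fin (n + 1) → S) (k : Fin (n + 1)), f k = o → finSum f = o := by
  intro n
  induction n with
  | zero => intro f k h; show f 0 = o; rwa [Fin.eq_zero k] at h
  | succ n ih =>
    intro f k h
    show finSum (fun i : Fin (n + 1) => f i.castSucc) + f (Fin.last (n + 1)) = o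
    rcases eq_or_ne k (Fin.last (n + 1)) with rfl | hk
    · rw [h]; exact ho _
    · obtain ⟨k', rfl⟩ := Fin.exists_castSucc_eq.mpr hk
      rw [ih _ k' h, add_comm]; exact ho _

theorem finSum_mul_left (a : S) : ∀ {n : ℕ} (f : Fin (n + 1) → S),
    a * finSum f = finSum (fun i => a * f i)
  | 0, f => rfl
  | (n + 1), f => by
    show a * (finSum _ + _) = finSum (fun i : Fin (n + 1) => a * f i.castSucc) + _
    rw [pdl, finSum_mul_left a]

theorem finSum_mul_right (a : S) : ∀ {n : ℕ} (f : Fin (n + 1) → S),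
    finSum f * a = finSum (fun i => f i * a)
  | 0, f => rfl
  | (n + 1), f => by
    show (finSum _ + _) * a = finSum (fun i : Fin (n + 1) => f i.castSucc * a) + _
    rw [pdr, finSum_mul_right a]

theorem Mat.ext'_s10 {n : ℕ} {A B : Mat n S} (h : ∀ i j, A.entry i j = B.entry i j) :
    A = B := by
  cases A; cases B
  simp only [Mat.mk.injEq]
  funext i j; exact h i j

theorem Mat.add_entry {n : ℕ} (A B : Mat n S) (i j : Fin (n + 1)) :
    (A + B).entry i j = A.entry i j + B.entry i j := rfl

theorem Mat.mul_entry {n : ℕ} (A B : Mat n S) (i j : Fin (n + 1)) :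
    (A * B).entry i j = finSum (fun k => A.entry i k * B.entry k j) := rfl

theorem nontriv_of_mat {n : ℕ} (h : ∃ A B : Mat n S, A ≠ B) : ∃ a b : S, a ≠ b := by
  obtain ⟨A, B, hAB⟩ := h
  by_contra h'
  push_neg at h'
  exact hAB (Mat.ext'_s10 fun i j => h' _ _)

theorem mat_const_ne {n : ℕ} {x y : S} (h : x ≠ y) : Mat.const n x ≠ Mat.const n y :=
  fun e => h (congrArg (fun A => Mat.entry A 0 0) e)

end Aux
section EmatSec
variable {S : Type} [PSemiring S]

/-- Matrix with `x` at `(i,j)` and `w` elsewhere. -/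
def Emat (w : S) {n : ℕ} (i j : Fin (n + 1)) (x : S) : Mat n S :=
  ⟨fun a b => if a = i ∧ b = j then x else w⟩

theorem Emat_entry (w : S) {n : ℕ} (i j a b : Fin (n + 1)) (x : S) :
    (Emat w i j x).entry a b = if a = i ∧ b = j then x else w := rfl

variable {w : S} (hm : MulAbsorbing w) (hn : AddNeutral w)
include hm hn

omit hm in
theorem Emat_add {n : ℕ} (i j : Fin (n + 1)) (x y : S) :
    Emat w i j x + Emat w i j y = Emat w i j (x + y) := by
  apply Mat.ext'_s10
  intro a b
  rw [Mat.add_entry, Emat_entry, Emat_entry, Emat_entry]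
  by_cases h : a = i ∧ b = j
  · simp [h]
  · simp only [h, if_false]; exact hn w

theorem Emat_mul {n : ℕ} (i k j : Fin (n + 1)) (x y : S) :
    Emat w i k x * Emat w k j y = Emat w i j (x * y) := by
  apply Mat.ext'_s10
  intro a b
  rw [Mat.mul_entry, Emat_entry]
  by_cases h : a = i ∧ b = j
  · obtain ⟨rfl, rfl⟩ := h
    simp only [and_self, if_true]
    have hside : ∀ c, c ≠ k →
        (Emat w a k x).entry a c * (Emat w k b y).entry c b = w := by
      intro c hc
      rw [Emat_entry]
      simp only [hc, and_false, if_false]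
      exact (hm _).2
    rw [finSum_eq_single hn _ k hside, Emat_entry, Emat_entry]; simp
  · simp only [h, if_false]
    apply finSum_all hn
    intro c
    rw [Emat_entry, Emat_entry]
    by_cases h1 : a = i ∧ c = k
    · have h2 : ¬(c = k ∧ b = j) := fun hc => h ⟨h1.1, hc.2⟩
      rw [if_pos h1, if_neg h2]
      exact (hm _).1
    · simp only [h1, if_false]
      exact (hm _).2

theorem Emat_mul_left {n : ℕ} (i p : Fin (n + 1)) (x : S) (A : Mat n S)
    (a b : Fin (n + 1)) :
    (Emat w i p x * A).entry a b = if a = i then x * A.entry p b else w := by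
  rw [Mat.mul_entry]
  by_cases h : a = i
  · subst h
    simp only [if_true]
    have hside : ∀ c, c ≠ p → (Emat w a p x).entry a c * A.entry c b = w := by
      intro c hc
      rw [Emat_entry]
      simp only [hc, and_false, if_false]
      exact (hm _).2
    rw [finSum_eq_single hn _ p hside, Emat_entry]; simp
  · simp only [h, if_false]
    apply finSum_all hn
    intro c
    rw [Emat_entry]
    simp only [h, false_and, if_false]
    exact (hm _).2

theorem Emat_mul_right {n : ℕ} (q j : Fin (n + 1)) (y : S) (A : Mat n S)
    (a b : Fin (n + 1)) :
    (A * Emat w q j y).entry a b = if b = j then A.entry a q * y else w := by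
  rw [Mat.mul_entry]
  by_cases h : b = j
  · subst h
    simp only [if_true]
    have hside : ∀ c, c ≠ q → A.entry a c * (Emat w q b y).entry c b = w := by
      intro c hc
      rw [Emat_entry]
      simp only [hc, false_and, if_false]
      exact (hm _).1
    rw [finSum_eq_single hn _ q hside, Emat_entry]; simp
  · simp only [h, if_false]
    apply finSum_all hn
    intro c
    rw [Emat_entry]
    simp only [h, and_false, if_false]
    exact (hm _).1

theorem Emat_triple {n : ℕ} (i p q j : Fin (n + 1)) (x y : S) (A : Mat n S) :
    (Emat w i p x * A) * Emat w q j y = Emat w i j (x * A.entry p q * y) := by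
  apply Mat.ext'_s10
  intro a b
  rw [Emat_mul_right hm hn, Emat_entry]
  by_cases hb : b = j
  · rw [Emat_mul_left hm hn]
    by_cases ha : a = i
    · simp [ha, hb]
    · simp only [ha, hb, if_false, false_and, if_false]
      exact (hm _).2
  · simp [hb]

omit hm hn in
theorem finSum_entry {n m : ℕ} :
    ∀ (F : Fin (m + 1) → Mat n S) (a b : Fin (n + 1)),
      (finSum F).entry a b = finSum (fun t => (F t).entry a b) := by
  induction m with
  | zero => intro F a b; rfl
  | succ m ih =>
    intro F a b
    have h0 : finSum F
        = finSum (fun i : Fin (m + 1) => F i.castSucc) + F (Fin.last (m + 1)) := rfl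
    rw [h0, Mat.add_entry, ih]
    rfl

omit hm in
theorem mat_decomp {n : ℕ} (X : Mat n S) :
    X = finSum (fun i => finSum (fun j => Emat w i j (X.entry i j))) := by
  apply Mat.ext'_s10
  intro a b
  rw [finSum_entry]
  have hrow : ∀ i : Fin (n + 1),
      (finSum (fun j => Emat w i j (X.entry i j))).entry a b
        = if a = i then X.entry a b else w := by
    intro i
    rw [finSum_entry]
    by_cases ha : a = i
    · subst ha
      rw [if_pos rfl]
      have hside : ∀ c, c ≠ b → (Emat w a c (X.entry a c)).entry a b = w := by
        intro c hc; rw [Emat_entry, if_neg]; exact fun hh => hc hh.2.symm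
      rw [finSum_eq_single hn _ b hside, Emat_entry]; simp
    · rw [if_neg ha]
      apply finSum_all hn
      intro c; rw [Emat_entry]; simp [ha]
  have hside2 : ∀ c, c ≠ a →
      (finSum (fun j => Emat w c j (X.entry c j))).entry a b = w := by
    intro c hc; rw [hrow, if_neg (fun h : a = c => hc h.symm)]
  rw [finSum_eq_single hn _ a hside2, hrow, if_pos rfl]

end EmatSec
section Scongs
variable {S : Type} [PSemiring S]

theorem D0_cong : IsCongruence (fun u v : S =>
    ∀ x y : S, x * u * y = x * v * y ∧ x * u = x * v ∧ u * y = v * y) := by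
  refine ⟨⟨fun u x y => ⟨rfl, rfl, rfl⟩,
    fun h x y => ⟨(h x y).1.symm, (h x y).2.1.symm, (h x y).2.2.symm⟩,
    fun h h' x y => ⟨(h x y).1.trans (h' x y).1, (h x y).2.1.trans (h' x y).2.1,
      (h x y).2.2.trans (h' x y).2.2⟩⟩, ?_, ?_⟩
  · intro a b c d h h' x y
    refine ⟨?_, ?_, ?_⟩
    · rw [pdl, pdr, (h x y).1, (h' x y).1, ← pdr, ← pdl]
    · rw [pdl, (h x y).2.1, (h' x y).2.1, ← pdl]
    · rw [pdr, (h x y).2.2, (h' x y).2.2, ← pdr]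
  · intro a b c d h h' x y
    have hab : x * a = x * b := (h x x).2.1
    refine ⟨?_, ?_, ?_⟩
    · calc x * (a * c) * y = x * a * c * y := by rw [mul_assoc x a c]
        _ = x * a * d * y := (h' (x * a) y).1
        _ = x * b * d * y := by rw [hab]
        _ = x * (b * d) * y := by rw [mul_assoc x b d]
    · calc x * (a * c) = x * a * c := (mul_assoc x a c).symm
        _ = x * a * d := (h' (x * a) (x * a)).2.1
        _ = x * b * d := by rw [hab]
        _ = x * (b * d) := mul_assoc x b d
    · calc a * c * y = a * (c * y) := mul_assoc a c y
        _ = b * (c * y) := (h a (c * y)).2.2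
        _ = b * c * y := (mul_assoc b c y).symm
        _ = b * d * y := (h' b y).1

theorem D1_cong : IsCongruence (fun u v : S => ∀ x y : S, x * u * y = x * v * y) := by
  refine ⟨⟨fun u x y => rfl, fun h x y => (h x y).symm,
    fun h h' x y => (h x y).trans (h' x y)⟩, ?_, ?_⟩
  · intro a b c d h h' x y
    rw [pdl, pdr, h x y, h' x y, ← pdr, ← pdl]
  · intro a b c d h h' x y
    have hab : ∀ z y : S, z * a * y = z * b * y := h
    calc x * (a * c) * y = x * a * c * y := by rw [mul_assoc x a c]
      _ = x * a * (c * y) := by rw [mul_assoc (x * a) c y]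
      _ = x * b * (c * y) := hab x (c * y)
      _ = x * b * c * y := by rw [mul_assoc (x * b) c y]
      _ = x * b * d * y := h' (x * b) y
      _ = x * (b * d) * y := by rw [mul_assoc x b d]

theorem D0_not_full (hss : ∃ a b c d : S, a * b ≠ c * d) :
    ¬ ∀ u v x y : S, x * u * y = x * v * y ∧ x * u = x * v ∧ u * y = v * y := by
  intro hfull
  obtain ⟨a, b, c, d, hab⟩ := hss
  exact hab (((hfull b d a a).2.1).trans ((hfull a c d d).2.2))

theorem D1_trivial (hs : CongSimple S) (hss : ∃ a b c d : S, a * b ≠ c * d)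
    {w : S} (hm : MulAbsorbing w) :
    ∀ u v : S, (∀ x y : S, x * u * y = x * v * y) → u = v := by
  intro u v h
  rcases hs.2 _ D1_cong with ht | hf
  · exact (ht u v).mp h
  · exfalso
    have hw : ∀ x u y : S, x * u * y = w := by
      intro x u y
      calc x * u * y = x * w * y := hf u w x y
        _ = w * y := by rw [(hm x).1]
        _ = w := (hm y).2
    obtain ⟨a, b, c, d, hab⟩ := hss
    have hD0 : ∀ x y : S, x * (a * b) * y = x * (c * d) * y ∧
        x * (a * b) = x * (c * d) ∧ (a * b) * y = (c * d) * y := by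
      intro x y
      refine ⟨?_, ?_, ?_⟩
      · calc x * (a * b) * y = x * a * b * y := by rw [mul_assoc x a b]
          _ = w := hw (x * a) b y
          _ = x * c * d * y := (hw (x * c) d y).symm
          _ = x * (c * d) * y := by rw [mul_assoc x c d]
      · calc x * (a * b) = x * a * b := (mul_assoc x a b).symm
          _ = w := hw x a b
          _ = x * c * d := (hw x c d).symm
          _ = x * (c * d) := mul_assoc x c d
      · calc a * b * y = w := hw a b y
          _ = c * d * y := (hw c d y).symm
    rcases hs.2 _ D0_cong with ht0 | hf0
    · exact hab ((ht0 _ _).mp hD0)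
    · exact D0_not_full ⟨a, b, c, d, hab⟩ fun u v x y => hf0 u v x y

end Scongs
section Main
variable {S : Type} [PSemiring S]

theorem extract_absorbing {k : ℕ} (hk : ∃ W : Mat k S, MulAbsorbing W) :
    ∃ w : S, MulAbsorbing w := by
  obtain ⟨W, hW⟩ := hk
  have h1 : ∀ a : S, a * finSum (fun l => W.entry l 0) = W.entry 0 0 := by
    intro a
    have h := congrArg (fun A => Mat.entry A 0 0) (hW (Mat.const k a)).1
    simp only [Mat.mul_entry] at h
    rw [finSum_mul_left]
    exact h
  have h2 : ∀ a : S, finSum (fun l => W.entry 0 l) * a = W.entry 0 0 := by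
    intro a
    have h := congrArg (fun A => Mat.entry A 0 0) (hW (Mat.const k a)).2
    simp only [Mat.mul_entry] at h
    rw [finSum_mul_right]
    exact h
  refine ⟨W.entry 0 0, fun x => ⟨?_, ?_⟩⟩
  · calc x * W.entry 0 0 = x * (x * finSum (fun l => W.entry l 0)) := by rw [h1]
      _ = (x * x) * finSum (fun l => W.entry l 0) := (mul_assoc _ _ _).symm
      _ = W.entry 0 0 := h1 _
  · calc W.entry 0 0 * x = (finSum (fun l => W.entry 0 l) * x) * x := by rw [h2]
      _ = finSum (fun l => W.entry 0 l) * (x * x) := mul_assoc _ _ _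
      _ = W.entry 0 0 := h2 _

theorem zero_of_no_biabs {w : S} (hm : MulAbsorbing w) (hs : CongSimple S)
    (hno : ¬ ∃ o : S, BiAbsorbing o) : AddNeutral w := by
  have hww : w + w = w := by
    have hs2 : MulAbsorbing (w + w) := by
      intro a
      constructor
      · rw [pdl, (hm a).1]
      · rw [pdr, (hm a).2]
    calc w + w = w * (w + w) := ((hs2 w).1).symm
      _ = w := (hm (w + w)).2
  have hc : IsCongruence (fun a b : S => a + w = b + w) := by
    refine ⟨⟨fun a => rfl, fun h => h.symm, fun h h' => h.trans h'⟩, ?_, ?_⟩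
    · intro a b c d h h'
      have e : ∀ u v : S, (u + v) + w = (u + w) + (v + w) := by
        intro u v
        have e2 : (u + w) + (v + w) = (u + v) + (w + w) := by
          simp only [add_assoc, add_comm, add_left_comm]
        rw [e2, hww]
      rw [e a c, e b d, h, h']
    · intro a b c d h h'
      calc a * c + w = a * c + a * w := by rw [(hm a).1]
        _ = a * (c + w) := (pdl a c w).symm
        _ = a * (d + w) := by rw [h']
        _ = a * d + a * w := pdl a d w
        _ = a * d + w := by rw [(hm a).1]
        _ = a * d + w * d := by rw [(hm d).2]
        _ = (a + w) * d := (pdr a w d).symm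
        _ = (b + w) * d := by rw [h]
        _ = b * d + w * d := pdr b w d
        _ = b * d + w := by rw [(hm d).2]
  rcases hs.2 _ hc with ht | hf
  · intro a
    have h3 : (a + w) + w = a + w := by rw [add_assoc, hww]
    exact (ht (a + w) a).mp h3
  · exact absurd ⟨w, hm, fun a => (hf a w).trans (by rw [hww])⟩ hno

end Main
section Necessity
variable {S : Type} [PSemiring S]

theorem lift_cong {n : ℕ} (r : S → S → Prop) (hr : IsCongruence r) :
    IsCongruence (fun A B : Mat n S => ∀ i j, r (A.entry i j) (B.entry i j)) := by
  obtain ⟨⟨hrefl, hsymm, htrans⟩, hadd, hmul⟩ := hr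
  refine ⟨⟨fun A i j => hrefl _, fun h i j => hsymm (h i j),
    fun h h' i j => htrans (h i j) (h' i j)⟩, ?_, ?_⟩
  · intro A B C D h h' i j
    exact hadd _ _ _ _ (h i j) (h' i j)
  · intro A B C D h h' i j
    rw [Mat.mul_entry, Mat.mul_entry]
    exact finSum_rel r hadd _ _ fun t => hmul _ _ _ _ (h i t) (h' t j)

theorem S_simple_of {n : ℕ} (h : CongSimple (Mat n S)) : CongSimple S := by
  obtain ⟨hne, hdich⟩ := h
  refine ⟨nontriv_of_mat hne, ?_⟩
  intro r hr
  rcases hdich _ (lift_cong r hr) with ht | hf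
  · left
    intro a b
    constructor
    · intro hab
      have h2 : Mat.const n a = Mat.const n b :=
        (ht _ _).mp fun i j => hab
      exact congrArg (fun A => Mat.entry A 0 0) h2
    · rintro rfl
      exact hr.1.refl a
  · right
    intro a b
    exact hf (Mat.const n a) (Mat.const n b) 0 0

theorem no_biabs_of {n : ℕ} (h : CongSimple (Mat (n + 1) S)) :
    ¬ ∃ o : S, BiAbsorbing o := by
  rintro ⟨o, hom, hoa⟩
  obtain ⟨hne, hdich⟩ := h
  obtain ⟨x, y, hxy⟩ := nontriv_of_mat hne
  obtain ⟨z, hz⟩ : ∃ z : S, z ≠ o := by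
    rcases eq_or_ne x o with rfl | hx
    · exact ⟨y, fun e => hxy (e.trans rfl).symm⟩
    · exact ⟨x, hx⟩
  have hI : ∀ (A C : Mat (n + 1) S) (i j : Fin (n + 2)), A.entry i j = o →
      (∃ a b, (A * C).entry a b = o) ∧ (∃ a b, (C * A).entry a b = o) := by
    intro A C i j hij
    constructor
    · refine ⟨i, 0, ?_⟩
      rw [Mat.mul_entry]
      refine finSum_absorb hoa _ j ?_
      rw [hij]
      exact (hom _).2
    · refine ⟨0, j, ?_⟩
      rw [Mat.mul_entry]
      refine finSum_absorb hoa _ i ?_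
      rw [hij]
      exact (hom _).1
  have hC : IsCongruence (fun A B : Mat (n + 1) S =>
      A = B ∨ ((∃ i j, A.entry i j = o) ∧ (∃ i j, B.entry i j = o))) := by
    refine ⟨⟨fun A => Or.inl rfl, ?_, ?_⟩, ?_, ?_⟩
    · intro A B h
      rcases h with rfl | ⟨h1, h2⟩
      · exact Or.inl rfl
      · exact Or.inr ⟨h2, h1⟩
    · intro A B C h h'
      rcases h with rfl | ⟨h1, h2⟩ <;> rcases h' with rfl | ⟨h3, h4⟩
      · exact Or.inl rfl
      · exact Or.inr ⟨h3, h4⟩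
      · exact Or.inr ⟨h1, h2⟩
      · exact Or.inr ⟨h1, h4⟩
    · rintro A B C D (rfl | ⟨⟨i, j, h1⟩, ⟨i', j', h2⟩⟩) (rfl | ⟨⟨p, q, h3⟩, ⟨p', q', h4⟩⟩)
      · exact Or.inl rfl
      · refine Or.inr ⟨⟨p, q, ?_⟩, ⟨p', q', ?_⟩⟩
        · rw [Mat.add_entry, h3]; exact hoa _
        · rw [Mat.add_entry, h4]; exact hoa _
      · refine Or.inr ⟨⟨i, j, ?_⟩, ⟨i', j', ?_⟩⟩
        · rw [Mat.add_entry, h1, add_comm]; exact hoa _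
        · rw [Mat.add_entry, h2, add_comm]; exact hoa _
      · refine Or.inr ⟨⟨i, j, ?_⟩, ⟨i', j', ?_⟩⟩
        · rw [Mat.add_entry, h1, add_comm]; exact hoa _
        · rw [Mat.add_entry, h2, add_comm]; exact hoa _
    · rintro A B C D (rfl | ⟨⟨i, j, h1⟩, ⟨i', j', h2⟩⟩) (rfl | ⟨⟨p, q, h3⟩, ⟨p', q', h4⟩⟩)
      · exact Or.inl rfl
      · exact Or.inr ⟨(hI C A p q h3).2, (hI D A p' q' h4).2⟩
      · exact Or.inr ⟨(hI A C i j h1).1, (hI B C i' j' h2).1⟩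
      · exact Or.inr ⟨(hI A C i j h1).1, (hI B D i' j' h2).1⟩
  rcases hdich _ hC with ht | hf
  · set B : Mat (n + 1) S := ⟨fun a b => if a = 0 ∧ b = 0 then o else z⟩ with hB
    have hBoo : B.entry 0 0 = o := by simp [hB]
    have heq := (ht (Mat.const (n + 1) o) B).mp
      (Or.inr ⟨⟨0, 0, rfl⟩, ⟨0, 0, hBoo⟩⟩)
    have h01 : o = B.entry 0 1 := congrArg (fun A => Mat.entry A 0 1) heq
    have hB01 : B.entry 0 1 = z := by
      show (if (0 : Fin (n + 2)) = 0 ∧ (1 : Fin (n + 2)) = 0 then o else z) = z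
      rw [if_neg]
      exact fun hc => Fin.zero_ne_one' hc.2.symm
    rw [hB01] at h01
    exact hz h01.symm
  · rcases hf (Mat.const (n + 1) z) (Mat.const (n + 1) o) with heq | ⟨⟨i, j, hzo⟩, _⟩
    · exact hz (congrArg (fun A => Mat.entry A 0 0) heq)
    · exact hz hzo

end Necessity
section Suff
variable {S : Type} [PSemiring S]

theorem prod_ne_of {n : ℕ} (h : CongSimple (Mat (n + 1) S)) :
    ∃ a b c d : S, a * b ≠ c * d := by
  by_contra hcon
  push_neg at hcon
  obtain ⟨hne, hdich⟩ := h
  obtain ⟨x, y, hxy⟩ := nontriv_of_mat hne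
  have hC : IsCongruence (fun A B : Mat (n + 1) S => A.entry 0 0 = B.entry 0 0) := by
    refine ⟨⟨fun A => rfl, fun h => h.symm, fun h h' => h.trans h'⟩, ?_, ?_⟩
    · intro A B C D h h'
      rw [Mat.add_entry, Mat.add_entry, h, h']
    · intro A B C D _ _
      rw [Mat.mul_entry, Mat.mul_entry]
      exact finSum_congr fun t => hcon _ _ _ _
  rcases hdich _ hC with ht | hf
  · set B : Mat (n + 1) S := ⟨fun a b => if a = 0 ∧ b = 0 then x else y⟩ with hB
    have h1 : (Mat.const (n + 1) x).entry 0 0 = B.entry 0 0 := by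
      show x = if (0 : Fin (n + 2)) = 0 ∧ (0 : Fin (n + 2)) = 0 then x else y
      rw [if_pos ⟨rfl, rfl⟩]
    have heq := (ht _ _).mp h1
    have h01 : x = B.entry 0 1 := congrArg (fun A => Mat.entry A 0 1) heq
    have hB01 : B.entry 0 1 = y := by
      show (if (0 : Fin (n + 2)) = 0 ∧ (1 : Fin (n + 2)) = 0 then x else y) = y
      rw [if_neg]
      exact fun hcc => Fin.zero_ne_one' hcc.2.symm
    exact hxy (h01.trans hB01)
  · exact hxy (hf (Mat.const (n + 1) x) (Mat.const (n + 1) y))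

theorem key_simple {w : S} (hm : MulAbsorbing w) (hn : AddNeutral w)
    (hs : CongSimple S) (hss : ∃ a b c d : S, a * b ≠ c * d) (n : ℕ) :
    CongSimple (Mat n S) := by
  obtain ⟨x, y, hxy⟩ := hs.1
  refine ⟨⟨Mat.const n x, Mat.const n y, mat_const_ne hxy⟩, ?_⟩
  intro R hR
  obtain ⟨hEq, hAdd, hMul⟩ := hR
  have hrs : IsCongruence (fun u v : S =>
      ∀ i j : Fin (n + 1), R (Emat w i j u) (Emat w i j v)) := by
    refine ⟨⟨fun u i j => hEq.refl _, fun h i j => hEq.symm (h i j),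
      fun h h' i j => hEq.trans (h i j) (h' i j)⟩, ?_, ?_⟩
    · intro a b c d h h' i j
      have h2 := hAdd _ _ _ _ (h i j) (h' i j)
      rwa [Emat_add hn, Emat_add hn] at h2
    · intro a b c d h h' i j
      have h2 := hMul _ _ _ _ (h i i) (h' i j)
      rwa [Emat_mul hm hn, Emat_mul hm hn] at h2
  rcases hs.2 _ hrs with ht | hf
  · left
    intro A B
    constructor
    · intro hAB
      apply Mat.ext'_s10
      intro p q
      apply D1_trivial hs hss hm
      intro xx yy
      have h2 : ∀ i j : Fin (n + 1), R (Emat w i j (xx * A.entry p q * yy))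
          (Emat w i j (xx * B.entry p q * yy)) := by
        intro i j
        have h3 := hMul _ _ _ _ (hMul _ _ _ _ (hEq.refl (Emat w i p xx)) hAB)
          (hEq.refl (Emat w q j yy))
        rwa [Emat_triple hm hn, Emat_triple hm hn] at h3
      exact (ht _ _).mp h2
    · rintro rfl
      exact hEq.refl A
  · right
    intro A B
    rw [mat_decomp hn A, mat_decomp hn B]
    apply finSum_rel R hAdd
    intro i
    apply finSum_rel R hAdd
    intro j
    exact hf _ _ i j

end Suff
/-- if some `M_k(S)` has a multiplicatively absorbing element, then
(i) all `M_n(S)` (`n ≥ 1`) congruence-simple ↔ (ii) some `M_n(S)` (`n ≥ 2`)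
congruence-simple ↔ (iii) `S` congruence-simple, without bi-absorbing element and
`|S·S| ≥ 2`.  (`Mat n S` has size `n+1`.) -/
theorem stmt10 {S : Type} [PSemiring S] (k : ℕ)
    (hk : ∃ W : Mat k S, MulAbsorbing W) :
    ((∀ n : ℕ, CongSimple (Mat n S)) ↔ ∃ n : ℕ, CongSimple (Mat (n + 1) S)) ∧
    ((∃ n : ℕ, CongSimple (Mat (n + 1) S)) ↔
      (CongSimple S ∧ (¬∃ o : S, BiAbsorbing o) ∧ ∃ a b c d : S, a * b ≠ c * d)) := by
  obtain ⟨w, hm⟩ := extract_absorbing hk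
  have hfor : (∃ n : ℕ, CongSimple (Mat (n + 1) S)) →
      CongSimple S ∧ (¬∃ o : S, BiAbsorbing o) ∧ ∃ a b c d : S, a * b ≠ c * d := by
    rintro ⟨n, h⟩
    exact ⟨S_simple_of h, no_biabs_of h, prod_ne_of h⟩
  have hback : (CongSimple S ∧ (¬∃ o : S, BiAbsorbing o) ∧
      ∃ a b c d : S, a * b ≠ c * d) → ∀ n : ℕ, CongSimple (Mat n S) := by
    rintro ⟨hs, hno, hss⟩ n
    exact key_simple hm (zero_of_no_biabs hm hs hno) hs hss n
  exact ⟨⟨fun h => ⟨0, h 1⟩, fun h n => hback (hfor h) n⟩,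
    ⟨hfor, fun h => ⟨0, hback h 1⟩⟩⟩
end

section
/- Let S be a congruence-simple additively cancellative semiring that is not a ring. Then the standard quasiordering ≤_S on S is antisymmetric, hence a partial order on S. -/
section Aux
variable {S : Type} [PSemiring S]

lemma leS_trans' {a b c : S} (h : leS a b) (h' : leS b c) : leS a c := by
  rcases h with rfl | ⟨x, hx⟩
  · exact h'
  · rcases h' with rfl | ⟨y, hy⟩
    · exact Or.inr ⟨x, hx⟩
    · exact Or.inr ⟨x + y, by rw [← add_assoc, hx, hy]⟩

lemma leS_add' {a b c d : S} (h : leS a b) (h' : leS c d) : leS (a + c) (b + d) := by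
  rcases h with rfl | ⟨x, hx⟩ <;> rcases h' with rfl | ⟨y, hy⟩
  · exact Or.inl rfl
  · exact Or.inr ⟨y, by rw [add_assoc, hy]⟩
  · exact Or.inr ⟨x, by rw [add_right_comm, hx]⟩
  · exact Or.inr ⟨x + y, by
      rw [← hx, ← hy]; rw [add_assoc, add_assoc]
      congr 1
      rw [← add_assoc, ← add_assoc, add_comm c x]⟩

lemma leS_mul' {a b c d : S} (h : leS a b) (h' : leS c d) : leS (a * c) (b * d) := by
  rcases h with rfl | ⟨x, hx⟩ <;> rcases h' with rfl | ⟨y, hy⟩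
  · exact Or.inl rfl
  · exact Or.inr ⟨a * y, by rw [← PSemiring.left_distrib, hy]⟩
  · exact Or.inr ⟨x * c, by rw [← PSemiring.right_distrib, hx]⟩
  · exact Or.inr ⟨a * y + (x * c + x * y), by
      rw [← hx, ← hy, PSemiring.right_distrib, PSemiring.left_distrib,
        PSemiring.left_distrib, add_assoc]⟩

end Aux

/-- for a congruence-simple additively cancellative semiring that is
not a ring, the standard quasiordering is antisymmetric. -/
theorem stmt19 {S : Type} [PSemiring S] (h1 : CongSimple S)
    (h2 : ∀ a b c : S, a + c = b + c → a = b)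
    (h3 : ¬∃ z : S, (∀ a : S, a + z = a) ∧ ∀ a : S, ∃ b : S, a + b = z) :
    ∀ a b : S, leS a b → leS b a → a = b := by
  set r : S → S → Prop := fun a b => leS a b ∧ leS b a with hr
  have hcong : IsCongruence r := by
    refine ⟨⟨fun a => ⟨Or.inl rfl, Or.inl rfl⟩, fun h => ⟨h.2, h.1⟩,
      fun h h' => ⟨leS_trans' h.1 h'.1, leS_trans' h'.2 h.2⟩⟩,
      fun a b c d h h' => ⟨leS_add' h.1 h'.1, leS_add' h.2 h'.2⟩,
      fun a b c d h h' => ⟨leS_mul' h.1 h'.1, leS_mul' h.2 h'.2⟩⟩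
  rcases h1.2 r hcong with hid | hfull
  · intro a b hab hba
    exact (hid a b).mp ⟨hab, hba⟩
  · -- r is full: derive that S is a ring, contradicting h3
    exfalso
    apply h3
    obtain ⟨a, _, _⟩ := h1.1
    -- find an additively idempotent element z with a + z = a
    have haa : leS (a + a) a := (hfull (a + a) a).1
    obtain ⟨z, hz1, hz2⟩ : ∃ z : S, a + z = a ∧ z + z = z := by
      rcases haa with he | ⟨c, hc⟩
      · exact ⟨a, he, he⟩
      · have ha : a + (a + c) = a := by rw [← add_assoc, hc]
        refine ⟨a + c, ha, h2 _ _ a ?_⟩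
        rw [add_assoc, add_comm (a + c) a, ha, add_comm (a + c) a, ha]
    -- z is neutral for every b
    have hneut : ∀ b : S, b + z = b := by
      intro b
      rcases (hfull z b).1 with rfl | ⟨c, hc⟩
      · rw [hz2]
      · rw [← hc, add_assoc, add_comm c z, ← add_assoc, hz2]
    refine ⟨z, hneut, fun b => ?_⟩
    rcases (hfull b z).1 with he | ⟨c, hc⟩
    · exact ⟨z, by rw [he, hz2]⟩
    · exact ⟨c, hc⟩
end
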